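/- Let X be a real Banach space, A : X → Set X an accretive operator with zer A ≠ ∅, and for each γ > 0 let J_γ : X → X be a resolvent function of A. Let α ∈ [0,1), f : X → X an α-contraction, x ∈ X, (α_n) a sequence in [0,1], (λ_n) a sequence in (0,∞), (e_n) a sequence in X, and (x_n) the VAMe iteration. Assume Σ_{n=0}^∞ α_n = ∞, Σ_{n=0}^∞ |α_n − α_{n+1}| < ∞, Σ_{n=0}^∞ ‖e_n‖ < ∞, and at least one of the following holds: (a) Σ_{n=0}^∞ |1 − λ_{n+1}/λ_n| < ∞; (b) Σ_{n=0}^∞ |1 − λ_n/λ_{n+1}| < ∞; (c) inf_{n∈ℕ} λ_n > 0 and Σ_{n=0}^∞ |λ_n − λ_{n+1}| < ∞. Then lim_{n→∞} ‖x_n − x_{n+1}‖ = 0. -/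

import Mathlib

open Filter


lemma vame_aux (s t c : ℕ → ℝ) (hs0 : ∀ n, 0 ≤ s n) (ht0 : ∀ n, 0 ≤ t n)
    (ht1 : ∀ n, t n ≤ 1) (hc0 : ∀ n, 0 ≤ c n)
    (hrec : ∀ n, s (n + 1) ≤ (1 - t n) * s n + c n)
    (hcs : Summable c)
    (htd : Tendsto (fun n => ∑ i ∈ Finset.range n, t i) atTop atTop) :
    Tendsto s atTop (nhds 0) := by
  rw [Metric.tendsto_atTop]
  intro ε hε
  have htail : Tendsto (fun m => ∑' k, c (k + m)) atTop (nhds 0) := tendsto_sum_nat_add c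
  obtain ⟨m, hm⟩ : ∃ m, ∑' k, c (k + m) < ε / 2 :=
    (htail.eventually (gt_mem_nhds (by linarith : (0:ℝ) < ε / 2))).exists
  have key : ∀ n, m ≤ n → s n ≤ (∏ k ∈ Finset.Ico m n, (1 - t k)) * s m +
      ∑ k ∈ Finset.Ico m n, c k := by
    intro n hn
    induction n, hn using Nat.le_induction with
    | base => simp
    | succ n hn ih =>
      rw [Finset.prod_Ico_succ_top hn, Finset.sum_Ico_succ_top hn]
      calc s (n + 1) ≤ (1 - t n) * s n + c n := hrec n
        _ ≤ (1 - t n) * ((∏ k ∈ Finset.Ico m n, (1 - t k)) * s m +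
              ∑ k ∈ Finset.Ico m n, c k) + c n := by
            have h1 : (0:ℝ) ≤ 1 - t n := by linarith [ht1 n]
            nlinarith [ih, h1]
        _ ≤ (∏ k ∈ Finset.Ico m n, (1 - t k)) * (1 - t n) * s m +
              (∑ k ∈ Finset.Ico m n, c k + c n) := by
            have h1 : (0:ℝ) ≤ 1 - t n := by linarith [ht1 n]
            have h2 : (0:ℝ) ≤ ∑ k ∈ Finset.Ico m n, c k :=
              Finset.sum_nonneg fun k _ => hc0 k
            nlinarith [ht0 n]
  have prodle : ∀ n, (∏ k ∈ Finset.Ico m n, (1 - t k)) ≤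
      Real.exp (-(∑ k ∈ Finset.Ico m n, t k)) := by
    intro n
    calc (∏ k ∈ Finset.Ico m n, (1 - t k)) ≤ ∏ k ∈ Finset.Ico m n, Real.exp (-(t k)) :=
        Finset.prod_le_prod (fun k _ => by linarith [ht1 k])
          (fun k _ => by linarith [Real.add_one_le_exp (-(t k))])
      _ = Real.exp (∑ k ∈ Finset.Ico m n, -(t k)) := (Real.exp_sum _ _).symm
      _ = _ := by rw [← Finset.sum_neg_distrib]
  have hT : Tendsto (fun n => Real.exp (-(∑ k ∈ Finset.Ico m n, t k)) * s m) atTop (nhds 0) := by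
    have h1 : Tendsto (fun n => ∑ k ∈ Finset.Ico m n, t k) atTop atTop := by
      have h2 : Tendsto (fun n => (∑ k ∈ Finset.range n, t k) +
          -(∑ k ∈ Finset.range m, t k)) atTop atTop :=
        tendsto_atTop_add_const_right atTop _ htd
      apply h2.congr'
      filter_upwards [eventually_ge_atTop m] with n hn
      rw [Finset.sum_Ico_eq_sub _ hn]; ring
    have h3 : Tendsto (fun n => Real.exp (-(∑ k ∈ Finset.Ico m n, t k))) atTop (nhds 0) :=
      Real.tendsto_exp_atBot.comp (tendsto_neg_atTop_atBot.comp h1)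
    simpa using h3.mul_const (s m)
  obtain ⟨N, hN⟩ : ∃ N, ∀ n ≥ N, Real.exp (-(∑ k ∈ Finset.Ico m n, t k)) * s m < ε / 2 := by
    have := hT.eventually (gt_mem_nhds (by linarith : (0:ℝ) < ε / 2))
    exact eventually_atTop.mp this
  refine ⟨max m N, fun n hn => ?_⟩
  have hmn : m ≤ n := le_trans (le_max_left _ _) hn
  have hNn : N ≤ n := le_trans (le_max_right _ _) hn
  rw [Real.dist_eq, sub_zero, abs_of_nonneg (hs0 n)]
  have hsum_le : ∑ k ∈ Finset.Ico m n, c k ≤ ∑' k, c (k + m) := by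
    rw [Finset.sum_Ico_eq_sum_range]
    have hsh : Summable (fun k => c (k + m)) := (summable_nat_add_iff m).2 hcs
    calc ∑ k ∈ Finset.range (n - m), c (m + k)
        = ∑ k ∈ Finset.range (n - m), c (k + m) := by
          apply Finset.sum_congr rfl; intro k _; rw [add_comm]
      _ ≤ ∑' k, c (k + m) := Summable.sum_le_tsum _ (fun i _ => hc0 _) hsh
  calc s n ≤ (∏ k ∈ Finset.Ico m n, (1 - t k)) * s m + ∑ k ∈ Finset.Ico m n, c k := key n hmn
    _ ≤ Real.exp (-(∑ k ∈ Finset.Ico m n, t k)) * s m + ε / 2 := by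
        have := mul_le_mul_of_nonneg_right (prodle n) (hs0 m)
        linarith [hsum_le, hm]
    _ < ε := by linarith [hN n hNn]

set_option maxHeartbeats 1600000 in
theorem stmt_13 {X : Type*} [NormedAddCommGroup X] [NormedSpace ℝ X] [CompleteSpace X]
    (A : X → Set X)
    (hA : ∀ x y u v : X, u ∈ A x → v ∈ A y → ∀ γ : ℝ, 0 < γ →
      ‖x - y‖ ≤ ‖x - y + γ • (u - v)‖)
    (hzer : ∃ z : X, (0 : X) ∈ A z)
    (Jr : ℝ → X → X)
    (hJ : ∀ γ : ℝ, 0 < γ → ∀ x : X, γ⁻¹ • (x - Jr γ x) ∈ A (Jr γ x))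
    (α : ℝ) (hα0 : 0 ≤ α) (hα1 : α < 1)
    (f : X → X) (hf : ∀ x y : X, ‖f x - f y‖ ≤ α * ‖x - y‖)
    (x : X)
    (a : ℕ → ℝ) (ha : ∀ n, a n ∈ Set.Icc (0 : ℝ) 1)
    (lam : ℕ → ℝ) (hlam : ∀ n, 0 < lam n)
    (e : ℕ → X)
    (xs : ℕ → X) (hxs0 : xs 0 = x)
    (hxs : ∀ n : ℕ, xs (n + 1) = a n • f (xs n) + (1 - a n) • Jr (lam n) (xs n) + e n)
    (hadiv : Filter.Tendsto (fun n => ∑ i ∈ Finset.range n, a i) Filter.atTop Filter.atTop)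
    (hasum : Summable (fun n => |a n - a (n + 1)|))
    (hesum : Summable (fun n => ‖e n‖))
    (hlamcase :
      Summable (fun n => |1 - lam (n + 1) / lam n|) ∨
      Summable (fun n => |1 - lam n / lam (n + 1)|) ∨
      (0 < ⨅ n, lam n ∧ Summable (fun n => |lam n - lam (n + 1)|))) :
    Filter.Tendsto (fun n => ‖xs n - xs (n + 1)‖) Filter.atTop (nhds 0) := by
  obtain ⟨z, hz⟩ := hzer
  -- resolvents are nonexpansive
  have Jnon : ∀ γ : ℝ, 0 < γ → ∀ u v : X, ‖Jr γ u - Jr γ v‖ ≤ ‖u - v‖ := by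
    intro γ hγ u v
    have h := hA (Jr γ u) (Jr γ v) _ _ (hJ γ hγ u) (hJ γ hγ v) γ hγ
    have heq : Jr γ u - Jr γ v + γ • (γ⁻¹ • (u - Jr γ u) - γ⁻¹ • (v - Jr γ v)) = u - v := by
      rw [smul_sub, smul_inv_smul₀ hγ.ne', smul_inv_smul₀ hγ.ne']; abel
    rwa [heq] at h
  -- zeros are fixed points
  have Jfix : ∀ γ : ℝ, 0 < γ → Jr γ z = z := by
    intro γ hγ
    have h := hA (Jr γ z) z _ _ (hJ γ hγ z) hz γ hγ
    have heq : Jr γ z - z + γ • (γ⁻¹ • (z - Jr γ z) - 0) = 0 := by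
      rw [sub_zero, smul_inv_smul₀ hγ.ne']; abel
    rw [heq, norm_zero] at h
    exact sub_eq_zero.mp (norm_eq_zero.mp (le_antisymm h (norm_nonneg _)))
  -- resolvent comparison
  have Jcmp : ∀ l m : ℝ, 0 < l → 0 < m → ∀ u : X,
      ‖Jr l u - Jr m u‖ ≤ |1 - m / l| * ‖u - Jr l u‖ := by
    intro l m hl hm u
    have h := hA (Jr l u) (Jr m u) _ _ (hJ l hl u) (hJ m hm u) m hm
    have heq : Jr l u - Jr m u + m • (l⁻¹ • (u - Jr l u) - m⁻¹ • (u - Jr m u)) =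
        (m / l - 1) • (u - Jr l u) := by
      rw [smul_sub, smul_smul, smul_inv_smul₀ hm.ne', sub_smul, one_smul, div_eq_mul_inv]
      abel
    rw [heq, norm_smul, Real.norm_eq_abs, abs_sub_comm] at h
    exact h
  -- boundedness
  set F : ℝ := ‖f z - z‖ with hF
  set M : ℝ := max ‖x - z‖ (F / (1 - α)) with hMdef
  have hFM : F ≤ (1 - α) * M := by
    have h1 : F / (1 - α) ≤ M := le_max_right _ _
    rw [div_le_iff₀ (by linarith)] at h1
    linarith
  have hM0 : 0 ≤ M := le_trans (norm_nonneg _) (le_max_left _ _)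
  have hb : ∀ n, ‖xs n - z‖ ≤ M + ∑ i ∈ Finset.range n, ‖e i‖ := by
    intro n
    induction n with
    | zero =>
      simp only [Finset.range_zero, Finset.sum_empty, add_zero, hxs0]
      exact le_max_left _ _
    | succ n ih =>
      have hS0 : (0:ℝ) ≤ ∑ i ∈ Finset.range n, ‖e i‖ :=
        Finset.sum_nonneg fun i _ => norm_nonneg _
      have hfz : ‖f (xs n) - z‖ ≤ α * ‖xs n - z‖ + F := by
        calc ‖f (xs n) - z‖ ≤ ‖f (xs n) - f z‖ + ‖f z - z‖ :=
              norm_sub_le_norm_sub_add_norm_sub _ _ _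
          _ ≤ α * ‖xs n - z‖ + F := by rw [hF]; exact add_le_add_left (hf _ _) _
      have hJz : ‖Jr (lam n) (xs n) - z‖ ≤ ‖xs n - z‖ := by
        have h := Jnon (lam n) (hlam n) (xs n) z
        rwa [Jfix (lam n) (hlam n)] at h
      have hdecomp : xs (n + 1) - z =
          a n • (f (xs n) - z) + (1 - a n) • (Jr (lam n) (xs n) - z) + e n := by
        rw [hxs n]; module
      have hnorm : ‖xs (n + 1) - z‖ ≤ a n * ‖f (xs n) - z‖ +
          (1 - a n) * ‖Jr (lam n) (xs n) - z‖ + ‖e n‖ := by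
        rw [hdecomp]
        calc ‖a n • (f (xs n) - z) + (1 - a n) • (Jr (lam n) (xs n) - z) + e n‖
            ≤ ‖a n • (f (xs n) - z) + (1 - a n) • (Jr (lam n) (xs n) - z)‖ + ‖e n‖ :=
              norm_add_le _ _
          _ ≤ ‖a n • (f (xs n) - z)‖ + ‖(1 - a n) • (Jr (lam n) (xs n) - z)‖ + ‖e n‖ :=
              add_le_add_left (norm_add_le _ _) _
          _ = a n * ‖f (xs n) - z‖ + (1 - a n) * ‖Jr (lam n) (xs n) - z‖ + ‖e n‖ := by
              rw [norm_smul, norm_smul, Real.norm_eq_abs, Real.norm_eq_abs,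
                abs_of_nonneg (ha n).1, abs_of_nonneg (by linarith [(ha n).2] : (0:ℝ) ≤ 1 - a n)]
      rw [Finset.sum_range_succ]
      have h1 := (ha n).1
      have h2 := (ha n).2
      have hr0 : (0:ℝ) ≤ ‖xs n - z‖ := norm_nonneg _
      have haα : (0:ℝ) ≤ 1 - a n * (1 - α) := by nlinarith
      nlinarith [mul_le_mul_of_nonneg_left hfz h1,
        mul_le_mul_of_nonneg_left hJz (by linarith : (0:ℝ) ≤ 1 - a n),
        mul_le_mul_of_nonneg_left hFM h1,
        mul_nonneg haα
          (by linarith : (0:ℝ) ≤ M + ∑ i ∈ Finset.range n, ‖e i‖ - ‖xs n - z‖),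
        mul_nonneg (mul_nonneg h1 (by linarith : (0:ℝ) ≤ 1 - α)) hS0]
  set E : ℝ := ∑' n, ‖e n‖ with hE
  have hE0 : ∀ n, ∑ i ∈ Finset.range n, ‖e i‖ ≤ E :=
    fun n => Summable.sum_le_tsum _ (fun i _ => norm_nonneg _) hesum
  set B : ℝ := M + E with hB
  have hxB : ∀ n, ‖xs n - z‖ ≤ B := fun n => le_trans (hb n) (by linarith [hE0 n])
  have hB0 : 0 ≤ B := le_trans (norm_nonneg _) (hxB 0)
  have hJxB : ∀ n, ∀ γ : ℝ, 0 < γ → ‖Jr γ (xs n) - z‖ ≤ B := by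
    intro n γ hγ
    have h := Jnon γ hγ (xs n) z
    rw [Jfix γ hγ] at h
    exact le_trans h (hxB n)
  have hRx : ∀ n, ∀ γ : ℝ, 0 < γ → ‖xs n - Jr γ (xs n)‖ ≤ 2 * B := by
    intro n γ hγ
    calc ‖xs n - Jr γ (xs n)‖ ≤ ‖xs n - z‖ + ‖z - Jr γ (xs n)‖ :=
          norm_sub_le_norm_sub_add_norm_sub _ _ _
      _ ≤ 2 * B := by
          have := hJxB n γ hγ
          rw [norm_sub_rev] at this
          linarith [hxB n]
  set C : ℝ := α * B + F + B with hC
  have hG : ∀ n, ‖f (xs n) - Jr (lam n) (xs n)‖ ≤ C := by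
    intro n
    calc ‖f (xs n) - Jr (lam n) (xs n)‖ ≤ ‖f (xs n) - z‖ + ‖z - Jr (lam n) (xs n)‖ :=
          norm_sub_le_norm_sub_add_norm_sub _ _ _
      _ ≤ C := by
          have h1 : ‖f (xs n) - z‖ ≤ α * B + F := by
            calc ‖f (xs n) - z‖ ≤ ‖f (xs n) - f z‖ + ‖f z - z‖ :=
                  norm_sub_le_norm_sub_add_norm_sub _ _ _
              _ ≤ α * B + F := by
                  have := le_trans (hf (xs n) z) (by nlinarith [hxB n] : α * ‖xs n - z‖ ≤ α * B)
                  rw [hF]; linarith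
          have h2 := hJxB n (lam n) (hlam n)
          rw [norm_sub_rev] at h2
          linarith
  -- summability of the resolvent-difference term
  set D : ℕ → ℝ := fun n => ‖Jr (lam (n + 1)) (xs n) - Jr (lam n) (xs n)‖ with hD
  have hDsum : Summable D := by
    have h2B : (0:ℝ) ≤ 2 * B := by linarith
    rcases hlamcase with hcase | hcase | ⟨hL, hcase⟩
    · apply Summable.of_nonneg_of_le (fun n => norm_nonneg _)
        (f := fun n => |1 - lam (n + 1) / lam n| * (2 * B)) _ (hcase.mul_right _)
      intro n
      have h := Jcmp (lam n) (lam (n + 1)) (hlam n) (hlam (n + 1)) (xs n)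
      rw [norm_sub_rev] at h
      calc D n ≤ |1 - lam (n + 1) / lam n| * ‖xs n - Jr (lam n) (xs n)‖ := h
        _ ≤ |1 - lam (n + 1) / lam n| * (2 * B) :=
            mul_le_mul_of_nonneg_left (hRx n (lam n) (hlam n)) (abs_nonneg _)
    · apply Summable.of_nonneg_of_le (fun n => norm_nonneg _)
        (f := fun n => |1 - lam n / lam (n + 1)| * (2 * B)) _ (hcase.mul_right _)
      intro n
      have h := Jcmp (lam (n + 1)) (lam n) (hlam (n + 1)) (hlam n) (xs n)
      calc D n ≤ |1 - lam n / lam (n + 1)| * ‖xs n - Jr (lam (n + 1)) (xs n)‖ := h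
        _ ≤ |1 - lam n / lam (n + 1)| * (2 * B) :=
            mul_le_mul_of_nonneg_left (hRx n (lam (n + 1)) (hlam (n + 1))) (abs_nonneg _)
    · set L : ℝ := ⨅ n, lam n with hLdef
      have hbdd : BddBelow (Set.range lam) := ⟨0, by rintro y ⟨n, rfl⟩; exact (hlam n).le⟩
      have hlamL : ∀ n, L ≤ lam n := fun n => ciInf_le hbdd n
      apply Summable.of_nonneg_of_le (fun n => norm_nonneg _)
        (f := fun n => |lam n - lam (n + 1)| * (2 * B / L)) _ (hcase.mul_right _)
      intro n
      have h := Jcmp (lam n) (lam (n + 1)) (hlam n) (hlam (n + 1)) (xs n)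
      rw [norm_sub_rev] at h
      have habs : |1 - lam (n + 1) / lam n| = |lam n - lam (n + 1)| / lam n := by
        have h0 : 1 - lam (n + 1) / lam n = (lam n - lam (n + 1)) / lam n := by
          rw [sub_div, div_self (hlam n).ne']
        rw [h0, abs_div, abs_of_pos (hlam n)]
      calc D n ≤ |1 - lam (n + 1) / lam n| * ‖xs n - Jr (lam n) (xs n)‖ := h
        _ ≤ |1 - lam (n + 1) / lam n| * (2 * B) :=
            mul_le_mul_of_nonneg_left (hRx n (lam n) (hlam n)) (abs_nonneg _)
        _ = |lam n - lam (n + 1)| / lam n * (2 * B) := by rw [habs]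
        _ ≤ |lam n - lam (n + 1)| / L * (2 * B) := by
            gcongr
            exact hlamL n
        _ = |lam n - lam (n + 1)| * (2 * B / L) := by ring
  -- set up the recursion
  set s : ℕ → ℝ := fun n => ‖xs (n + 1) - xs n‖ with hs
  set t : ℕ → ℝ := fun n => (1 - α) * a (n + 1) with ht
  set c : ℕ → ℝ := fun n => |a n - a (n + 1)| * C + D n + ‖e (n + 1)‖ + ‖e n‖ with hc
  have hC0 : 0 ≤ C := by
    have := hG 0
    linarith [norm_nonneg (f (xs 0) - Jr (lam 0) (xs 0))]
  have hrec : ∀ n, s (n + 1) ≤ (1 - t n) * s n + c n := by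
    intro n
    have hdec : xs (n + 2) - xs (n + 1) =
        a (n + 1) • (f (xs (n + 1)) - f (xs n)) +
        (1 - a (n + 1)) • (Jr (lam (n + 1)) (xs (n + 1)) - Jr (lam (n + 1)) (xs n)) +
        (1 - a (n + 1)) • (Jr (lam (n + 1)) (xs n) - Jr (lam n) (xs n)) +
        (a (n + 1) - a n) • (f (xs n) - Jr (lam n) (xs n)) +
        (e (n + 1) - e n) := by
      rw [hxs (n + 1), hxs n]; module
    have h1 := (ha (n + 1)).1
    have h2 := (ha (n + 1)).2
    have hnorm : ‖xs (n + 2) - xs (n + 1)‖ ≤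
        a (n + 1) * ‖f (xs (n + 1)) - f (xs n)‖ +
        (1 - a (n + 1)) * ‖Jr (lam (n + 1)) (xs (n + 1)) - Jr (lam (n + 1)) (xs n)‖ +
        (1 - a (n + 1)) * D n +
        |a (n + 1) - a n| * ‖f (xs n) - Jr (lam n) (xs n)‖ +
        (‖e (n + 1)‖ + ‖e n‖) := by
      rw [hdec]
      have step : ∀ p q r u v : X, ‖p + q + r + u + v‖ ≤ ‖p‖ + ‖q‖ + ‖r‖ + ‖u‖ + ‖v‖ := by
        intro p q r u v
        calc ‖p + q + r + u + v‖ ≤ ‖p + q + r + u‖ + ‖v‖ := norm_add_le _ _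
          _ ≤ ‖p + q + r‖ + ‖u‖ + ‖v‖ := add_le_add_left (norm_add_le _ _) _
          _ ≤ ‖p + q‖ + ‖r‖ + ‖u‖ + ‖v‖ := by
              have := norm_add_le (p + q) r; linarith
          _ ≤ ‖p‖ + ‖q‖ + ‖r‖ + ‖u‖ + ‖v‖ := by
              have := norm_add_le p q; linarith
      refine le_trans (step _ _ _ _ _) ?_
      simp only [norm_smul, Real.norm_eq_abs, abs_of_nonneg h1,
        abs_of_nonneg (show (0:ℝ) ≤ 1 - a (n + 1) by linarith)]
      have hee := norm_sub_le (e (n + 1)) (e n)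
      have hDeq : ‖Jr (lam (n + 1)) (xs n) - Jr (lam n) (xs n)‖ = D n := rfl
      linarith
    have hff : ‖f (xs (n + 1)) - f (xs n)‖ ≤ α * s n := hf _ _
    have hJJ : ‖Jr (lam (n + 1)) (xs (n + 1)) - Jr (lam (n + 1)) (xs n)‖ ≤ s n :=
      Jnon (lam (n + 1)) (hlam (n + 1)) _ _
    have hGn := hG n
    have hD0 : 0 ≤ D n := norm_nonneg _
    have hs0 : (0:ℝ) ≤ s n := norm_nonneg _
    have habs : |a (n + 1) - a n| = |a n - a (n + 1)| := abs_sub_comm _ _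
    have key : s (n + 1) ≤ (1 - t n) * s n + c n := by
      simp only [hs, ht, hc]
      have e1 : a (n + 1) * ‖f (xs (n + 1)) - f (xs n)‖ ≤ a (n + 1) * (α * s n) :=
        mul_le_mul_of_nonneg_left hff h1
      have e2 : (1 - a (n + 1)) * ‖Jr (lam (n + 1)) (xs (n + 1)) - Jr (lam (n + 1)) (xs n)‖ ≤
          (1 - a (n + 1)) * s n := mul_le_mul_of_nonneg_left hJJ (by linarith)
      have e3 : (1 - a (n + 1)) * D n ≤ D n := by nlinarith
      have e4 : |a (n + 1) - a n| * ‖f (xs n) - Jr (lam n) (xs n)‖ ≤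
          |a n - a (n + 1)| * C := by
        rw [← habs]; exact mul_le_mul_of_nonneg_left hGn (abs_nonneg _)
      have : ‖xs (n + 1 + 1) - xs (n + 1)‖ ≤
          a (n + 1) * (α * s n) + (1 - a (n + 1)) * s n + D n +
          |a n - a (n + 1)| * C + (‖e (n + 1)‖ + ‖e n‖) := by
        have h := hnorm
        linarith
      calc ‖xs (n + 1 + 1) - xs (n + 1)‖ ≤
          a (n + 1) * (α * s n) + (1 - a (n + 1)) * s n + D n +
          |a n - a (n + 1)| * C + (‖e (n + 1)‖ + ‖e n‖) := this
        _ = (1 - (1 - α) * a (n + 1)) * s n +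
            (|a n - a (n + 1)| * C + D n + ‖e (n + 1)‖ + ‖e n‖) := by ring
    exact key
  have hcs : Summable c := by
    have hs1 : Summable (fun n => |a n - a (n + 1)| * C) := hasum.mul_right C
    have hs3 : Summable (fun n => ‖e (n + 1)‖) := (summable_nat_add_iff 1).2 hesum
    exact ((hs1.add hDsum).add hs3).add hesum
  have htd : Tendsto (fun n => ∑ i ∈ Finset.range n, t i) atTop atTop := by
    have h1 : ∀ n, ∑ i ∈ Finset.range n, a (i + 1) =
        ∑ i ∈ Finset.range (n + 1), a i + -(a 0) := by
      intro n; rw [Finset.sum_range_succ']; ring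
    have h2 : Tendsto (fun n => ∑ i ∈ Finset.range (n + 1), a i + -(a 0)) atTop atTop :=
      tendsto_atTop_add_const_right atTop _ (hadiv.comp (tendsto_add_atTop_nat 1))
    have h3 : Tendsto (fun n => ∑ i ∈ Finset.range n, a (i + 1)) atTop atTop :=
      h2.congr fun n => (h1 n).symm
    have h4 : Tendsto (fun n => (1 - α) * ∑ i ∈ Finset.range n, a (i + 1)) atTop atTop :=
      Tendsto.const_mul_atTop (by linarith) h3
    apply h4.congr
    intro n
    rw [Finset.mul_sum]
  have hmain : Tendsto s atTop (nhds 0) := by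
    apply vame_aux s t c (fun n => norm_nonneg _) _ _ _ hrec hcs htd
    · intro n
      exact mul_nonneg (by linarith) (ha (n + 1)).1
    · intro n
      simp only [ht]
      nlinarith [(ha (n + 1)).1, (ha (n + 1)).2]
    · intro n
      have := norm_nonneg (e n)
      have := norm_nonneg (e (n + 1))
      have hD0 : 0 ≤ D n := norm_nonneg _
      have := mul_nonneg (abs_nonneg (a n - a (n + 1))) hC0
      simp only [hc]
      linarith
  have heq : (fun n => ‖xs n - xs (n + 1)‖) = s := by
    funext n
    simp only [hs]
    rw [norm_sub_rev]
  rw [heq]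
  exact hmain
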